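/- The IR refinement preserves efficiency and yields individual rationality for superadditive valuations: if at each arrival of player i the rule first gives i the amount v({i}) and then distributes the remainder v(Sᵢ) − v(Sᵢ∖{i}) − v({i}) (which is non-negative by superadditivity) among arrived players as non-negative amounts summing to that remainder, then each player's final cumulative share is at least v({i}), and the total distributed equals v(N). -/
import Mathlib

/-- The set of players arrived up to and including step `t`, under arrival order `π`. -/
def arrivedSet {n : ℕ} (π : Equiv.Perm (Fin n)) (t : Fin n) : Finset (Fin n) :=
  (Finset.Iic t).image π

/-- The IR refinement preserves efficiency and yields individual rationality for
superadditive valuations: if at each arrival of player `π t` the rule first gives that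
player `v {π t}` and then distributes the residual
`v (arrivedSet t) - v (arrivedSet t \ {π t}) - v {π t}` among arrived players as
non-negative amounts `r t ·` summing to that residual, then the residual at each step
is non-negative, each player's final cumulative share `v {p} + ∑ t, r t p` is at least
`v {p}`, and the total distributed equals `v univ`. -/
theorem ir_refinement {n : ℕ}
    (v : Finset (Fin n) → ℝ) (π : Equiv.Perm (Fin n))
    (hnorm : v ∅ = 0)
    (hmono : ∀ S T : Finset (Fin n), S ⊆ T → v S ≤ v T)
    (hsuper : ∀ S T : Finset (Fin n), Disjoint S T → v S + v T ≤ v (S ∪ T))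
    (r : Fin n → Fin n → ℝ)
    (hrnonneg : ∀ t p, 0 ≤ r t p)
    (hrsupp : ∀ t p, p ∉ arrivedSet π t → r t p = 0)
    (hrsum : ∀ t, ∑ p, r t p =
      v (arrivedSet π t) - v ((arrivedSet π t).erase (π t)) - v {π t}) :
    (∀ t : Fin n,
      0 ≤ v (arrivedSet π t) - v ((arrivedSet π t).erase (π t)) - v {π t}) ∧
    (∀ p : Fin n, v {p} ≤ v {p} + ∑ t, r t p) ∧
    (∑ p, (v {p} + ∑ t, r t p)) = v Finset.univ := by
  -- key set identities
  set B : ℕ → Finset (Fin n) := fun k => (Finset.univ.filter (fun j : Fin n => j.val < k)).image π with hB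
  have hA : ∀ t : Fin n, arrivedSet π t = B (t.val + 1) := by
    intro t
    unfold arrivedSet
    congr 1
    ext j
    simp only [Finset.mem_Iic, Finset.mem_filter, Finset.mem_univ, true_and,
      Nat.lt_succ_iff, Fin.le_def]
  have hA' : ∀ t : Fin n, (arrivedSet π t).erase (π t) = B t.val := by
    intro t
    unfold arrivedSet
    rw [← Finset.image_erase π.injective]
    congr 1
    ext j
    simp only [Finset.mem_erase, Finset.mem_Iic, Finset.mem_filter, Finset.mem_univ,
      true_and, Fin.le_def, Fin.ext_iff]
    omega
  have hmem : ∀ t : Fin n, π t ∈ arrivedSet π t := by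
    intro t
    exact Finset.mem_image_of_mem π (Finset.mem_Iic.2 le_rfl)
  have h1 : ∀ t : Fin n,
      0 ≤ v (arrivedSet π t) - v ((arrivedSet π t).erase (π t)) - v {π t} := by
    intro t
    have hdisj : Disjoint ((arrivedSet π t).erase (π t)) {π t} := by
      simp [Finset.disjoint_singleton_right]
    have := hsuper _ _ hdisj
    have hunion : (arrivedSet π t).erase (π t) ∪ {π t} = arrivedSet π t := by
      rw [Finset.union_comm, ← Finset.insert_eq, Finset.insert_erase (hmem t)]
    rw [hunion] at this
    linarith
  refine ⟨h1, ?_, ?_⟩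
  · intro p
    have : 0 ≤ ∑ t, r t p := Finset.sum_nonneg fun t _ => hrnonneg t p
    linarith
  · have hsum : (∑ p, (v {p} + ∑ t, r t p))
        = ∑ p, v {p} + ∑ t, (∑ p, r t p) := by
      rw [Finset.sum_add_distrib, Finset.sum_comm]
    rw [hsum]
    have hsingle : ∑ p, v {p} = ∑ t : Fin n, v {π t} :=
      (Equiv.sum_comp π (fun p => v {p})).symm
    rw [hsingle]
    have : ∑ t : Fin n, v {π t} + ∑ t, (∑ p, r t p)
        = ∑ t : Fin n, (v (B (t.val + 1)) - v (B t.val)) := by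
      rw [← Finset.sum_add_distrib]
      apply Finset.sum_congr rfl
      intro t _
      rw [hrsum t, hA' t, hA t]
      ring
    rw [this]
    have htel : ∑ t : Fin n, (v (B (t.val + 1)) - v (B t.val))
        = ∑ k ∈ Finset.range n, (v (B (k + 1)) - v (B k)) := by
      rw [Finset.sum_range fun k => v (B (k+1)) - v (B k)]
    rw [htel, Finset.sum_range_sub (fun k => v (B k))]
    have hB0 : B 0 = ∅ := by simp [hB]
    have hBn : B n = Finset.univ := by
      rw [hB]
      simp only
      rw [Finset.filter_true_of_mem (fun j _ => j.isLt)]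
      ext j
      simp only [Finset.mem_image, Finset.mem_univ, iff_true]
      exact ⟨π.symm j, trivial, π.apply_symm_apply j⟩
    rw [hB0, hBn, hnorm, sub_zero]
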